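/- Let A, C ∈ ℝ^{n×n}, B, D ∈ ℝ^{n×m}, F ∈ ℝ^{m×n}, Z ∈ ℝ^{n×n} symmetric. Define A_F := [A, B; FA, FB] and C_F := [C, D; FC, FD] in ℝ^{(n+m)×(n+m)}. If a symmetric S ∈ ℝ^{(n+m)×(n+m)} satisfies S = A_F S A_F' + C_F S C_F' + [I;F] Z [I;F]', then its upper-left n×n block satisfies S₁₁ = (A+BF) S₁₁ (A+BF)' + (C+DF) S₁₁ (C+DF)' + Z. -/

import Mathlib

open Matrix

theorem stmt_1 {n m : ℕ}
    (A C : Matrix (Fin n) (Fin n) ℝ) (B D : Matrix (Fin n) (Fin m) ℝ)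
    (F : Matrix (Fin m) (Fin n) ℝ) (Z : Matrix (Fin n) (Fin n) ℝ)
    (hZ : Zᵀ = Z)
    (S : Matrix (Fin n ⊕ Fin m) (Fin n ⊕ Fin m) ℝ) (hSsym : Sᵀ = S)
    (hEq : S = (fromBlocks A B (F * A) (F * B)) * S * (fromBlocks A B (F * A) (F * B))ᵀ
        + (fromBlocks C D (F * C) (F * D)) * S * (fromBlocks C D (F * C) (F * D))ᵀ
        + (fromRows 1 F) * Z * (fromRows 1 F)ᵀ) :
    S.toBlocks₁₁ = (A + B * F) * S.toBlocks₁₁ * (A + B * F)ᵀ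
      + (C + D * F) * S.toBlocks₁₁ * (C + D * F)ᵀ + Z := by
  obtain ⟨S11, S12, S21, S22, rfl⟩ :
      ∃ a b c d, S = fromBlocks a b c d :=
    ⟨S.toBlocks₁₁, S.toBlocks₁₂, S.toBlocks₂₁, S.toBlocks₂₂, (fromBlocks_toBlocks S).symm⟩
  simp only [fromBlocks_transpose, fromBlocks_multiply, transpose_fromRows, fromRows_mul,
    fromRows_mul_fromCols, mul_fromCols, fromRows_fromCols_eq_fromBlocks, fromCols_fromRows_eq_fromBlocks, Matrix.one_mul, Matrix.mul_one, transpose_one,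
    fromBlocks_add, toBlocks_fromBlocks₁₁, fromBlocks_inj] at hEq hSsym ⊢
  obtain ⟨e11, e12, e21, e22⟩ := hEq
  obtain ⟨s11, s21, s12, s22⟩ := hSsym
  -- S21 = F * S11
  have h21 : S21 = F * S11 := by
    conv_lhs => rw [e21]
    conv_rhs => rw [e11]
    simp only [Matrix.mul_add, Matrix.add_mul, Matrix.mul_assoc]
  have h12 : S12 = S11 * Fᵀ := by
    rw [← s21, h21, transpose_mul, s11]
  have h22 : S22 = F * (S11 * Fᵀ) := by
    conv_lhs => rw [e22]
    conv_rhs => rw [← h12, e12]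
    simp only [Matrix.mul_add, Matrix.add_mul, Matrix.mul_assoc]
  rw [h12, h21, h22] at e11
  conv_lhs => rw [e11]
  simp only [Matrix.add_mul, Matrix.mul_add, Matrix.mul_assoc, transpose_add, transpose_mul]
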